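/- Let β>0. There exists C>0 such that for every z∈ℝ, z≠0: ( ∫_0^∞ | t^β ∂_t^β ℙ_t(z) |² dt/t )^{1/2} ≤ C / |z|. -/

import Mathlib

open MeasureTheory Real Set

noncomputable section

/-- The Segovia–Wheeden fractional derivative
`∂_t^β F(t) = (e^{-iπ(m-β)}/Γ(m-β)) ∫_0^∞ ∂_t^m F(t+s) s^{m-β-1} ds`. -/
def fracDeriv (β : ℝ) (m : ℕ) (F : ℝ → ℂ) (t : ℝ) : ℂ :=
  (Complex.exp (-(π : ℂ) * Complex.I * ((m : ℂ) - (β : ℂ))) /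
      ((Real.Gamma ((m : ℝ) - β) : ℝ) : ℂ)) *
    ∫ s in Set.Ioi (0 : ℝ), iteratedDeriv m F (t + s) * ((s ^ ((m : ℝ) - β - 1) : ℝ) : ℂ)

/-- The classical Poisson kernel on ℝ: `ℙ_t(z) = (1/π) t/(t²+z²)`. -/
def classicalPoissonKernel (t z : ℝ) : ℝ := (1 / π) * t / (t ^ 2 + z ^ 2)

lemma hasDerivAt_aux (w b : ℂ) (k : ℤ) (u : ℝ) (h : w + b * u ≠ 0) :
    HasDerivAt (fun v : ℝ => (w + b * v) ^ k) ((k : ℂ) * (w + b * u) ^ (k - 1) * b) u := by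
  have h1 : HasDerivAt (fun x : ℂ => w + b * x) b (u : ℂ) := by
    simpa using ((hasDerivAt_id (u : ℂ)).const_mul b).const_add w
  have h2 : HasDerivAt (fun y : ℂ => y ^ k) ((k : ℂ) * (w + b * u) ^ (k - 1)) (w + b * u) :=
    hasDerivAt_zpow k _ (Or.inl h)
  exact (h2.comp (u : ℂ) h1).comp_ofReal

lemma iteratedDeriv_combo (w1 w2 b1 b2 c1 c2 : ℂ)
    (h1 : ∀ u : ℝ, w1 + b1 * u ≠ 0) (h2 : ∀ u : ℝ, w2 + b2 * u ≠ 0) (n : ℕ) :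
    iteratedDeriv n (fun u : ℝ => c1 * (w1 + b1 * u)⁻¹ + c2 * (w2 + b2 * u)⁻¹) =
      fun u : ℝ => (-1) ^ n * (n.factorial : ℂ) *
        (c1 * b1 ^ n * (w1 + b1 * u) ^ (-(n : ℤ) - 1) +
         c2 * b2 ^ n * (w2 + b2 * u) ^ (-(n : ℤ) - 1)) := by
  induction n with
  | zero => funext u; simp [zpow_neg]
  | succ n ih =>
    funext u
    rw [iteratedDeriv_succ, ih]
    have d1 := (hasDerivAt_aux w1 b1 (-(n:ℤ)-1) u (h1 u)).const_mul
      ((-1) ^ n * (n.factorial : ℂ) * (c1 * b1 ^ n))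
    have d2 := (hasDerivAt_aux w2 b2 (-(n:ℤ)-1) u (h2 u)).const_mul
      ((-1) ^ n * (n.factorial : ℂ) * (c2 * b2 ^ n))
    have d := (d1.add d2).deriv
    have hfun : (fun u : ℝ => (-1) ^ n * (n.factorial : ℂ) *
        (c1 * b1 ^ n * (w1 + b1 * u) ^ (-(n : ℤ) - 1) +
         c2 * b2 ^ n * (w2 + b2 * u) ^ (-(n : ℤ) - 1))) =
        (fun y : ℝ => (-1) ^ n * (n.factorial : ℂ) * (c1 * b1 ^ n) * (w1 + b1 * y) ^ (-(n:ℤ)-1) +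
          (-1) ^ n * (n.factorial : ℂ) * (c2 * b2 ^ n) * (w2 + b2 * y) ^ (-(n:ℤ)-1)) := by
      funext y; ring
    rw [hfun]; erw [d]
    have e1 : (-(n:ℤ)-1) - 1 = -(((n+1 : ℕ)):ℤ) - 1 := by push_cast; ring
    rw [e1]
    have hfac : (((n+1 : ℕ)).factorial : ℂ) = ((n:ℂ)+1) * (n.factorial : ℂ) := by
      push_cast [Nat.factorial_succ]; ring
    rw [hfac]
    push_cast
    ring

lemma nonvanish (z : ℝ) (hz : z ≠ 0) (b : ℂ) (hb : b.re = 0) (u : ℝ) :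
    (z : ℂ) + b * u ≠ 0 := by
  intro hc
  have : ((z : ℂ) + b * u).re = 0 := by rw [hc]; simp
  simp [Complex.add_re, Complex.mul_re, hb, Complex.ofReal_re, Complex.ofReal_im] at this
  exact hz this

lemma poisson_decomp (z : ℝ) (hz : z ≠ 0) (u : ℝ) :
    ((classicalPoissonKernel u z : ℝ) : ℂ) =
      (1 / (2 * π * Complex.I)) * ((z : ℂ) + (-Complex.I) * u)⁻¹ +
      (-(1 / (2 * π * Complex.I))) * ((z : ℂ) + Complex.I * u)⁻¹ := by
  have h1 : (z : ℂ) + (-Complex.I) * u ≠ 0 := nonvanish z hz _ (by simp) u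
  have h2 : (z : ℂ) + Complex.I * u ≠ 0 := nonvanish z hz _ (by simp) u
  have hπ : (π : ℂ) ≠ 0 := by exact_mod_cast Real.pi_ne_zero
  have hprod : ((z : ℂ) + (-Complex.I) * u) * ((z : ℂ) + Complex.I * u) = (u:ℂ)^2 + (z:ℂ)^2 := by
    linear_combination (-(u:ℂ)^2) * Complex.I_sq
  have hd : ((u:ℂ)^2 + (z:ℂ)^2) ≠ 0 := by rw [← hprod]; exact mul_ne_zero h1 h2
  have hdr : ((u:ℝ)^2 + z^2) ≠ 0 := by
    intro hc; apply hd; exact_mod_cast congrArg (fun x : ℝ => (x:ℂ)) hc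
  have key : ((z : ℂ) + (-Complex.I) * u)⁻¹ - ((z : ℂ) + Complex.I * u)⁻¹ =
      2 * Complex.I * u / ((u:ℂ)^2 + (z:ℂ)^2) := by
    rw [inv_sub_inv h1 h2, hprod]
    congr 1; ring
  have : (1 / (2 * π * Complex.I)) * ((z : ℂ) + (-Complex.I) * u)⁻¹ +
      (-(1 / (2 * π * Complex.I))) * ((z : ℂ) + Complex.I * u)⁻¹ =
      (1 / (2 * π * Complex.I)) * (2 * Complex.I * u / ((u:ℂ)^2 + (z:ℂ)^2)) := by
    rw [← key]; ring
  rw [this]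
  unfold classicalPoissonKernel
  push_cast
  field_simp

lemma norm_lin_lower (z u : ℝ) (hu : 0 ≤ u) (b : ℂ) (hre : b.re = 0) (him : |b.im| = 1) :
    (|z| + u) / 2 ≤ ‖(z:ℂ) + b * u‖ := by
  have h1 : |z| ≤ ‖(z:ℂ) + b * u‖ := by
    have h := Complex.abs_re_le_norm ((z:ℂ) + b * u)
    simpa [Complex.add_re, Complex.mul_re, hre] using h
  have h2 : u ≤ ‖(z:ℂ) + b * u‖ := by
    have h := Complex.abs_im_le_norm ((z:ℂ) + b * u)
    have him' : ((z:ℂ) + b * u).im = b.im * u := by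
      simp [Complex.add_im, Complex.mul_im]
    rw [him', abs_mul, him, one_mul, abs_of_nonneg hu] at h
    exact h
  linarith

lemma zpow_norm_bound (z u : ℝ) (hz : z ≠ 0) (hu : 0 ≤ u) (m : ℕ) (b : ℂ)
    (hre : b.re = 0) (him : |b.im| = 1) :
    ‖((z:ℂ) + b * u) ^ (-(m:ℤ) - 1)‖ ≤ 2 ^ (m+1) / (|z| + u) ^ (m+1) := by
  have hzpos : 0 < |z| := abs_pos.mpr hz
  have hpos : 0 < (|z| + u) / 2 := by linarith
  have hE : (-(m:ℤ) - 1) = -(((m+1 : ℕ)):ℤ) := by push_cast; ring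
  rw [norm_zpow, hE, zpow_neg, zpow_natCast]
  have hle : ((|z| + u) / 2) ^ (m+1) ≤ ‖(z:ℂ) + b * u‖ ^ (m+1) :=
    pow_le_pow_left₀ hpos.le (norm_lin_lower z u hu b hre him) _
  calc (‖(z:ℂ) + b * u‖ ^ (m+1))⁻¹ ≤ (((|z| + u) / 2) ^ (m+1))⁻¹ := by
        apply inv_anti₀ (pow_pos hpos _) hle
    _ = 2 ^ (m+1) / (|z| + u) ^ (m+1) := by rw [div_pow, inv_div]

lemma deriv_bound (z : ℝ) (hz : z ≠ 0) (m : ℕ) (u : ℝ) (hu : 0 ≤ u) :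
    ‖iteratedDeriv m (fun v : ℝ => ((classicalPoissonKernel v z : ℝ) : ℂ)) u‖ ≤
      (m.factorial * 2 ^ (m+1) / π) / (|z| + u) ^ (m+1) := by
  have h1 : ∀ v : ℝ, (z : ℂ) + (-Complex.I) * v ≠ 0 := fun v => nonvanish z hz _ (by simp) v
  have h2 : ∀ v : ℝ, (z : ℂ) + Complex.I * v ≠ 0 := fun v => nonvanish z hz _ (by simp) v
  have hF : (fun v : ℝ => ((classicalPoissonKernel v z : ℝ) : ℂ)) =
      (fun v : ℝ => (1 / (2 * π * Complex.I)) * ((z : ℂ) + (-Complex.I) * v)⁻¹ +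
        (-(1 / (2 * π * Complex.I))) * ((z : ℂ) + Complex.I * v)⁻¹) :=
    funext (poisson_decomp z hz)
  rw [hF, iteratedDeriv_combo _ _ _ _ _ _ h1 h2 m]
  have hc : ‖(1 : ℂ) / (2 * π * Complex.I)‖ = 1 / (2 * π) := by
    simp [norm_div, abs_of_pos Real.pi_pos]
  have hb1 : ‖(-Complex.I) ^ m‖ = 1 := by
    rw [norm_pow]; simp
  have hb2 : ‖(Complex.I : ℂ) ^ m‖ = 1 := by
    rw [norm_pow]; simp
  have k1 := zpow_norm_bound z u hz hu m (-Complex.I) (by simp) (by simp)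
  have k2 := zpow_norm_bound z u hz hu m Complex.I (by simp) (by simp)
  calc ‖(-1) ^ m * (m.factorial : ℂ) *
        ((1 / (2 * π * Complex.I)) * (-Complex.I) ^ m * ((z:ℂ) + (-Complex.I) * u) ^ (-(m:ℤ) - 1) +
         (-(1 / (2 * π * Complex.I))) * Complex.I ^ m * ((z:ℂ) + Complex.I * u) ^ (-(m:ℤ) - 1))‖
      ≤ 1 * m.factorial * ((1/(2*π)) * 1 * (2 ^ (m+1) / (|z| + u) ^ (m+1)) +
          (1/(2*π)) * 1 * (2 ^ (m+1) / (|z| + u) ^ (m+1))) := by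
        rw [norm_mul, norm_mul, norm_pow, norm_neg, norm_one, one_pow]
        gcongr
        · simp
        apply le_trans (norm_add_le _ _)
        gcongr
        · rw [norm_mul, norm_mul, hc, hb1]; gcongr
        · rw [norm_mul, norm_mul, norm_neg, hc, hb2]; gcongr
    _ = (m.factorial * 2 ^ (m+1) / π) / (|z| + u) ^ (m+1) := by
        field_simp
        ring

lemma Jgen (A r q : ℝ) (hA : 0 < A) (hr : 0 < r) (hq : r < q) :
    IntegrableOn (fun s => s ^ (r-1) * (A + s) ^ (-q)) (Ioi (0:ℝ)) ∧
    ∫ s in Ioi (0:ℝ), s ^ (r-1) * (A + s) ^ (-q) ≤ (1/r + 1/(q-r)) * A ^ (r - q) := by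
  set g : ℝ → ℝ := fun s => s ^ (r-1) * (A + s) ^ (-q) with hg
  have hgcont : ContinuousOn g (Ioi 0) := by
    apply ContinuousOn.mul
    · exact fun x hx => (Real.continuousAt_rpow_const x _ (Or.inl (ne_of_gt hx))).continuousWithinAt
    · intro x hx
      have hx0 : (0:ℝ) < x := hx
      exact (((continuous_const.add continuous_id).continuousAt).rpow_const
        (Or.inl (by linarith : (0:ℝ) < A + x).ne')).continuousWithinAt
  have hgnn : ∀ s ∈ Ioi (0:ℝ), 0 ≤ g s := by
    intro s hs
    have : (0:ℝ) < s := hs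
    positivity
  -- piece 1 : Ioc 0 A
  have hg1int : IntegrableOn (fun s : ℝ => s ^ (r-1) * A ^ (-q)) (Ioc 0 A) := by
    have hii : IntervalIntegrable (fun x : ℝ => x ^ (r-1)) volume 0 A :=
      intervalIntegral.intervalIntegrable_rpow' (by linarith)
    exact ((intervalIntegrable_iff_integrableOn_Ioc_of_le hA.le).mp hii).mul_const _
  have hbound1 : ∀ s ∈ Ioc (0:ℝ) A, g s ≤ s ^ (r-1) * A ^ (-q) := by
    intro s hs
    have hs0 : (0:ℝ) < s := hs.1
    apply mul_le_mul_of_nonneg_left _ (by positivity : (0:ℝ) ≤ s ^ (r-1))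
    exact Real.rpow_le_rpow_of_nonpos hA (by linarith) (by linarith)
  have hint1 : IntegrableOn g (Ioc 0 A) := by
    apply Integrable.mono' hg1int
      ((hgcont.mono Ioc_subset_Ioi_self).aestronglyMeasurable measurableSet_Ioc)
    refine (ae_restrict_iff' measurableSet_Ioc).mpr (ae_of_all _ fun s hs => ?_)
    rw [Real.norm_eq_abs, abs_of_nonneg (hgnn s hs.1)]
    exact hbound1 s hs
  have hval1 : ∫ s in Ioc (0:ℝ) A, g s ≤ A ^ (r - q) / r := by
    have h1 : ∫ s in Ioc (0:ℝ) A, g s ≤ ∫ s in Ioc (0:ℝ) A, s ^ (r-1) * A ^ (-q) := by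
      apply integral_mono_of_nonneg
      · exact (ae_restrict_iff' measurableSet_Ioc).mpr (ae_of_all _ fun s hs => hgnn s hs.1)
      · exact hg1int
      · exact (ae_restrict_iff' measurableSet_Ioc).mpr (ae_of_all _ hbound1)
    have h2 : ∫ s in Ioc (0:ℝ) A, s ^ (r-1) * A ^ (-q) = (A ^ r / r) * A ^ (-q) := by
      rw [integral_mul_const, ← intervalIntegral.integral_of_le hA.le,
        integral_rpow (Or.inl (by linarith))]
      rw [Real.zero_rpow (by linarith : r - 1 + 1 ≠ 0)]
      ring_nf
    have h3 : (A ^ r / r) * A ^ (-q) = A ^ (r - q) / r := by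
      rw [div_mul_eq_mul_div, ← Real.rpow_add hA]
      ring_nf
    rw [h2, h3] at h1; exact h1
  -- piece 2 : Ioi A
  have hg2int : IntegrableOn (fun s : ℝ => s ^ (r-1-q)) (Ioi A) :=
    integrableOn_Ioi_rpow_of_lt (by linarith) hA
  have hbound2 : ∀ s ∈ Ioi A, g s ≤ s ^ (r-1-q) := by
    intro s hs
    have hs0 : (0:ℝ) < s := lt_trans hA hs
    have : (A + s) ^ (-q) ≤ s ^ (-q) :=
      Real.rpow_le_rpow_of_nonpos hs0 (by linarith) (by linarith)
    calc g s ≤ s ^ (r-1) * s ^ (-q) :=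
          mul_le_mul_of_nonneg_left this (by positivity)
      _ = s ^ (r-1-q) := by rw [← Real.rpow_add hs0]; ring_nf
  have hint2 : IntegrableOn g (Ioi A) := by
    apply Integrable.mono' hg2int
      ((hgcont.mono fun x hx => lt_trans hA hx).aestronglyMeasurable measurableSet_Ioi)
    refine (ae_restrict_iff' measurableSet_Ioi).mpr (ae_of_all _ fun s hs => ?_)
    rw [Real.norm_eq_abs, abs_of_nonneg (hgnn s (lt_trans hA hs))]
    exact hbound2 s hs
  have hval2 : ∫ s in Ioi A, g s ≤ A ^ (r - q) / (q - r) := by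
    have h1 : ∫ s in Ioi A, g s ≤ ∫ s in Ioi A, s ^ (r-1-q) := by
      apply integral_mono_of_nonneg
      · exact (ae_restrict_iff' measurableSet_Ioi).mpr
          (ae_of_all _ fun s hs => hgnn s (lt_trans hA hs))
      · exact hg2int
      · exact (ae_restrict_iff' measurableSet_Ioi).mpr (ae_of_all _ hbound2)
    have h2 : ∫ s in Ioi A, s ^ (r-1-q) = A ^ (r - q) / (q - r) := by
      rw [integral_Ioi_rpow_of_lt (by linarith) hA]
      rw [show r-1-q+1 = r-q by ring]
      rw [div_eq_div_iff (by linarith) (by linarith)]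
      ring
    rw [h2] at h1; exact h1
  have hunion : Ioc (0:ℝ) A ∪ Ioi A = Ioi 0 := Ioc_union_Ioi_eq_Ioi hA.le
  have hdisj : Disjoint (Ioc (0:ℝ) A) (Ioi A) := Ioc_disjoint_Ioi le_rfl
  have hint : IntegrableOn g (Ioi 0) := by
    rw [← hunion]; exact hint1.union hint2
  refine ⟨hint, ?_⟩
  rw [← hunion, setIntegral_union hdisj measurableSet_Ioi hint1 hint2]
  have : (1/r + 1/(q-r)) * A ^ (r-q) = A ^ (r-q)/r + A ^ (r-q)/(q-r) := by ring
  rw [this]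
  exact add_le_add hval1 hval2

lemma norm_prefactor (β : ℝ) (m : ℕ) :
    ‖Complex.exp (-(π : ℂ) * Complex.I * ((m : ℂ) - (β : ℂ))) /
      ((Real.Gamma ((m : ℝ) - β) : ℝ) : ℂ)‖ = 1 / |Real.Gamma ((m : ℝ) - β)| := by
  rw [norm_div]
  congr 1
  · have h : (-(π : ℂ) * Complex.I * ((m : ℂ) - (β : ℂ))) =
        ((-π * ((m : ℝ) - β) : ℝ) : ℂ) * Complex.I := by push_cast; ring
    rw [h, Complex.norm_exp]
    simp [Complex.mul_re]
  · rw [Complex.norm_real, Real.norm_eq_abs]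

lemma fracDeriv_bound (β : ℝ) (hβ : 0 < β) (m : ℕ) (hm2 : β < m)
    (z : ℝ) (hz : z ≠ 0) (t : ℝ) (ht : 0 < t) :
    ‖fracDeriv β m (fun u => ((classicalPoissonKernel u z : ℝ) : ℂ)) t‖ ≤
      ((1 / Real.Gamma ((m:ℝ) - β)) * (m.factorial * 2 ^ (m+1) / π) *
        (1/((m:ℝ) - β) + 1/(β+1))) * (|z| + t) ^ (-β - 1) := by
  set a := |z| with ha
  have ha0 : 0 < a := abs_pos.mpr hz
  have hA : 0 < a + t := by linarith
  have hr : 0 < (m:ℝ) - β := by linarith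
  have hΓ : 0 < Real.Gamma ((m:ℝ) - β) := Real.Gamma_pos_of_pos hr
  set B : ℝ := m.factorial * 2 ^ (m+1) / π with hB
  have hB0 : 0 ≤ B := by
    have := Real.pi_pos
    positivity
  have hrq : (m:ℝ) - β < (m:ℝ) + 1 := by linarith
  obtain ⟨hgint, hgval⟩ := Jgen (a + t) ((m:ℝ) - β) ((m:ℝ) + 1) hA hr hrq
  rw [show ((m:ℝ) - β - ((m:ℝ) + 1)) = -β - 1 by ring] at hgval
  rw [show ((m:ℝ) + 1 - ((m:ℝ) - β)) = β + 1 by ring] at hgval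
  -- pointwise bound on the integrand
  have hpt : ∀ s ∈ Ioi (0:ℝ),
      ‖iteratedDeriv m (fun u => ((classicalPoissonKernel u z : ℝ) : ℂ)) (t + s) *
        ((s ^ ((m : ℝ) - β - 1) : ℝ) : ℂ)‖ ≤
      B * (s ^ ((m:ℝ) - β - 1) * ((a + t) + s) ^ (-((m:ℝ) + 1))) := by
    intro s hs
    have hs0 : (0:ℝ) < s := hs
    rw [norm_mul, Complex.norm_real, Real.norm_eq_abs,
      abs_of_nonneg (Real.rpow_nonneg hs0.le _)]
    have h1 := deriv_bound z hz m (t + s) (by linarith)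
    have h2 : (a + (t + s)) ^ (m+1) = ((a + t) + s) ^ (((m:ℝ) + 1) : ℝ) := by
      rw [show a + (t + s) = (a + t) + s by ring,
        ← Real.rpow_natCast ((a+t)+s) (m+1)]
      congr 1
      push_cast; ring
    have h3 : B / (a + (t + s)) ^ (m+1) = B * ((a + t) + s) ^ (-((m:ℝ) + 1)) := by
      rw [h2, Real.rpow_neg (by linarith), div_eq_mul_inv]
    calc ‖iteratedDeriv m (fun u => ((classicalPoissonKernel u z : ℝ) : ℂ)) (t + s)‖ *
          s ^ ((m : ℝ) - β - 1)
        ≤ (B / (a + (t + s)) ^ (m+1)) * (s ^ ((m:ℝ) - β - 1)) := by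
          apply mul_le_mul_of_nonneg_right h1 (Real.rpow_nonneg hs0.le _)
      _ = B * (s ^ ((m:ℝ) - β - 1) * ((a + t) + s) ^ (-((m:ℝ) + 1))) := by rw [h3]; ring
  -- bound the integral
  have hI : ‖∫ s in Ioi (0:ℝ),
      iteratedDeriv m (fun u => ((classicalPoissonKernel u z : ℝ) : ℂ)) (t + s) *
        ((s ^ ((m : ℝ) - β - 1) : ℝ) : ℂ)‖ ≤
      B * ((1/((m:ℝ) - β) + 1/(β+1)) * (a+t) ^ (-β - 1)) := by
    apply le_trans (norm_integral_le_integral_norm _)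
    have step1 : ∫ s in Ioi (0:ℝ), ‖iteratedDeriv m
          (fun u => ((classicalPoissonKernel u z : ℝ) : ℂ)) (t + s) *
          ((s ^ ((m : ℝ) - β - 1) : ℝ) : ℂ)‖ ≤
        ∫ s in Ioi (0:ℝ), B * (s ^ ((m:ℝ) - β - 1) * ((a + t) + s) ^ (-((m:ℝ) + 1))) := by
      apply integral_mono_of_nonneg
      · exact ae_of_all _ fun s => norm_nonneg _
      · exact hgint.const_mul B
      · exact (ae_restrict_iff' measurableSet_Ioi).mpr (ae_of_all _ hpt)
    apply le_trans step1
    rw [integral_const_mul]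
    exact mul_le_mul_of_nonneg_left hgval hB0
  -- conclusion
  unfold fracDeriv
  rw [norm_mul, norm_prefactor, abs_of_pos hΓ]
  calc (1 / Real.Gamma ((m:ℝ) - β)) * ‖∫ s in Ioi (0:ℝ), iteratedDeriv m
          (fun u => ((classicalPoissonKernel u z : ℝ) : ℂ)) (t + s) *
          ((s ^ ((m : ℝ) - β - 1) : ℝ) : ℂ)‖
      ≤ (1 / Real.Gamma ((m:ℝ) - β)) *
          (B * ((1/((m:ℝ) - β) + 1/(β+1)) * (a+t) ^ (-β - 1))) := by
        apply mul_le_mul_of_nonneg_left hI (by positivity)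
    _ = ((1 / Real.Gamma ((m:ℝ) - β)) * B * (1/((m:ℝ) - β) + 1/(β+1))) *
          (a + t) ^ (-β - 1) := by ring

theorem statement16 (β : ℝ) (hβ : 0 < β)
    (m : ℕ) (hm1 : (m : ℝ) - 1 ≤ β) (hm2 : β < m) :
    ∃ C > (0 : ℝ), ∀ z : ℝ, z ≠ 0 →
      Real.sqrt (∫ t in Set.Ioi (0 : ℝ),
          ‖((t ^ β : ℝ) : ℂ) *
              fracDeriv β m (fun u => ((classicalPoissonKernel u z : ℝ) : ℂ)) t‖ ^ 2 / t) ≤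
        C / |z| := by
  have hr : 0 < (m:ℝ) - β := by linarith
  have hΓ : 0 < Real.Gamma ((m:ℝ) - β) := Real.Gamma_pos_of_pos hr
  have hfac : (0:ℝ) < m.factorial := by exact_mod_cast m.factorial_pos
  have hπ := Real.pi_pos
  set E : ℝ := (1 / Real.Gamma ((m:ℝ) - β)) * (m.factorial * 2 ^ (m+1) / π) *
    (1/((m:ℝ) - β) + 1/(β+1)) with hE
  have hE0 : 0 < E := by positivity
  clear_value E
  set K : ℝ := 1/(2*β) + 1/2 with hKdef
  have hK0 : 0 < K := by positivity
  clear_value K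
  refine ⟨E * Real.sqrt K, by positivity, ?_⟩
  intro z hz
  set a := |z| with ha
  have ha0 : 0 < a := abs_pos.mpr hz
  obtain ⟨hgint, hgval⟩ := Jgen a (2*β) (2*β+2) ha0 (by linarith) (by linarith)
  rw [show (2*β - (2*β+2) : ℝ) = -2 by ring, show ((2*β+2) - 2*β : ℝ) = 2 by ring] at hgval
  have ha2 : a ^ ((-2 : ℝ)) = (a^2)⁻¹ := by
    rw [show (-2:ℝ) = -((2:ℕ):ℝ) by norm_num, Real.rpow_neg ha0.le, Real.rpow_natCast]
  rw [ha2, ← hKdef] at hgval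
  -- pointwise bound
  have hpt : ∀ t ∈ Ioi (0:ℝ),
      ‖((t ^ β : ℝ) : ℂ) *
        fracDeriv β m (fun u => ((classicalPoissonKernel u z : ℝ) : ℂ)) t‖ ^ 2 / t ≤
      E^2 * (t ^ (2*β - 1) * (a + t) ^ (-(2*β+2))) := by
    intro t ht
    have ht0 : (0:ℝ) < t := ht
    have hA : 0 < a + t := by linarith
    have h1 : ‖((t ^ β : ℝ) : ℂ) *
        fracDeriv β m (fun u => ((classicalPoissonKernel u z : ℝ) : ℂ)) t‖ ≤
        t ^ β * (E * (a + t) ^ (-β - 1)) := by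
      rw [norm_mul, Complex.norm_real, Real.norm_eq_abs,
        abs_of_nonneg (Real.rpow_nonneg ht0.le _)]
      have hb := fracDeriv_bound β hβ m hm2 z hz t ht0
      rw [← ha, ← hE] at hb
      exact mul_le_mul_of_nonneg_left hb (Real.rpow_nonneg ht0.le _)
    have h2 : ‖((t ^ β : ℝ) : ℂ) *
        fracDeriv β m (fun u => ((classicalPoissonKernel u z : ℝ) : ℂ)) t‖ ^ 2 ≤
        (t ^ β * (E * (a + t) ^ (-β - 1))) ^ 2 :=
      pow_le_pow_left₀ (norm_nonneg _) h1 2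
    have key : (t ^ β * (E * (a + t) ^ (-β - 1))) ^ 2 / t =
        E^2 * (t ^ (2*β - 1) * (a + t) ^ (-(2*β+2))) := by
      have e1 : (a+t) ^ (-β-1) * (a+t) ^ (-β-1) = (a+t) ^ (-(2*β+2)) := by
        rw [← Real.rpow_add hA]; congr 1; ring
      have e2 : t ^ (2*β - 1) = t ^ β * t ^ β / t := by
        rw [show (2*β-1 : ℝ) = (β+β)-1 by ring, Real.rpow_sub ht0, Real.rpow_one,
          Real.rpow_add ht0]
      rw [e2, ← e1]
      ring
    calc ‖((t ^ β : ℝ) : ℂ) *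
          fracDeriv β m (fun u => ((classicalPoissonKernel u z : ℝ) : ℂ)) t‖ ^ 2 / t
        ≤ (t ^ β * (E * (a + t) ^ (-β - 1))) ^ 2 / t := by gcongr
      _ = E^2 * (t ^ (2*β - 1) * (a + t) ^ (-(2*β+2))) := key
  -- integral bound
  have hInt : ∫ t in Ioi (0:ℝ),
      ‖((t ^ β : ℝ) : ℂ) *
        fracDeriv β m (fun u => ((classicalPoissonKernel u z : ℝ) : ℂ)) t‖ ^ 2 / t ≤
      E^2 * (K * (a^2)⁻¹) := by
    have step1 : ∫ t in Ioi (0:ℝ),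
        ‖((t ^ β : ℝ) : ℂ) *
          fracDeriv β m (fun u => ((classicalPoissonKernel u z : ℝ) : ℂ)) t‖ ^ 2 / t ≤
        ∫ t in Ioi (0:ℝ), E^2 * (t ^ (2*β - 1) * (a + t) ^ (-(2*β+2))) := by
      apply integral_mono_of_nonneg
      · refine (ae_restrict_iff' measurableSet_Ioi).mpr (ae_of_all _ fun t ht => ?_)
        have ht0 : (0:ℝ) < t := ht
        positivity
      · exact hgint.const_mul _
      · exact (ae_restrict_iff' measurableSet_Ioi).mpr (ae_of_all _ hpt)
    apply le_trans step1
    rw [integral_const_mul]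
    exact mul_le_mul_of_nonneg_left hgval (by positivity)
  -- take square roots
  have hsq : E^2 * (K * (a^2)⁻¹) = (E * Real.sqrt K / a)^2 := by
    rw [div_pow, mul_pow, Real.sq_sqrt hK0.le]
    field_simp
  apply le_trans (Real.sqrt_le_sqrt hInt)
  rw [hsq, Real.sqrt_sq (by positivity)]
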